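/- Consider the BPP description with variables {X₁, Y₁, Z₁, W₁, S₁, X₀, Y₀, Z₀, A}, actions {τ, a, b, c} and rules X₁ →τ Y₁, X₁ →b Z₁, Y₁ →b W₁, Y₁ →τ Y₁A, Z₁ →τ W₁, Z₁ →τ Z₁A, W₁ →a S₁, S₁ →τ S₁A, W₁ →c X₀, S₁ →c Y₀, X₀ →τ Y₀, X₀ →b Z₀, Y₀ →b ε, X₀ →τ X₀A, Y₀ →τ Y₀A, Z₀ →τ Z₀A, Z₀ →τ ε, A →τ ε, A →a ε. Then X₁ ≈^L_{ω+ω} Y₁ (X₁ and Y₁ are related by the long-long approximant at level ω+ω) but X₁ ≉ Y₁; consequently long-long approximants do not stabilize at level ω+ω for BPP, i.e. ≈ ≠ ≈^L_{ω·2}. -/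

import Mathlib

/-- A Basic Parallel Processes description: finitely many variables, finitely many
actions (with a distinguished silent action `tau`) and finitely many rules. -/
structure BPP where
  V : Type
  Act : Type
  finV : Finite V
  finAct : Finite Act
  tau : Act
  T : Set (V × Act × Multiset V)
  finT : T.Finite

namespace BPP

variable (B : BPP)

/-- Processes are multisets of variables. -/
abbrev Proc (B : BPP) : Type := Multiset B.V

/-- The strong step relation `α →a β`. -/
def Step (a : B.Act) (α β : B.Proc) : Prop :=
  ∃ X γ δ, (X, a, γ) ∈ B.T ∧ α = X ::ₘ δ ∧ β = γ + δ

/-- `α ⇒τ β`: the reflexive–transitive closure of silent steps. -/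
def WTau : B.Proc → B.Proc → Prop :=
  Relation.ReflTransGen (B.Step B.tau)

/-- The weak step relation `α ⇒a β`. -/
def WStep (a : B.Act) (α β : B.Proc) : Prop :=
  (a = B.tau ∧ B.WTau α β) ∨
  (a ≠ B.tau ∧ ∃ γ δ, B.WTau α γ ∧ B.Step a γ δ ∧ B.WTau δ β)

/-- Weak steps along a word `w ∈ Act*`. -/
def WWord : List B.Act → B.Proc → B.Proc → Prop
  | [] => B.WTau
  | a :: w => fun α β => ∃ γ, B.WStep a α γ ∧ WWord w γ β

/-- A weak bisimulation. -/
def IsWeakBisim (R : B.Proc → B.Proc → Prop) : Prop :=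
  Symmetric R ∧
    ∀ α β, R α β → ∀ a α', B.Step a α α' → ∃ β', B.WStep a β β' ∧ R α' β'

/-- Weak bisimilarity `α ≈ β`. -/
def WBisim (α β : B.Proc) : Prop :=
  ∃ R, B.IsWeakBisim R ∧ R α β

/-- Refinement function for the short-long approximants: `Ψ(R)` is the largest
symmetric relation such that every strong attack is answered by a weak step into `R`. -/
def RefSL (R : B.Proc → B.Proc → Prop) (α β : B.Proc) : Prop :=
  (∀ a α', B.Step a α α' → ∃ β', B.WStep a β β' ∧ R α' β') ∧
  (∀ a β', B.Step a β β' → ∃ α', B.WStep a α α' ∧ R α' β')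

/-- Refinement function for the long-long approximants: weak attacks, weak responses. -/
def RefLL (R : B.Proc → B.Proc → Prop) (α β : B.Proc) : Prop :=
  (∀ a α', B.WStep a α α' → ∃ β', B.WStep a β β' ∧ R α' β') ∧
  (∀ a β', B.WStep a β β' → ∃ α', B.WStep a α α' ∧ R α' β')

/-- Refinement function for the word approximants: attacks along words, responses
along the same word. -/
def RefW (R : B.Proc → B.Proc → Prop) (α β : B.Proc) : Prop :=
  (∀ w α', B.WWord w α α' → ∃ β', B.WWord w β β' ∧ R α' β') ∧
  (∀ w β', B.WWord w β β' → ∃ α', B.WWord w α α' ∧ R α' β')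

/-- Refinement function for the Parikh approximants: attacks along words, responses
along any word with the same Parikh image (multiset of letters). -/
def RefP (R : B.Proc → B.Proc → Prop) (α β : B.Proc) : Prop :=
  (∀ w α', B.WWord w α α' →
    ∃ (w' : List B.Act) (β' : B.Proc), (↑w' : Multiset B.Act) = ↑w ∧ B.WWord w' β β' ∧ R α' β') ∧
  (∀ w β', B.WWord w β β' →
    ∃ (w' : List B.Act) (α' : B.Proc), (↑w' : Multiset B.Act) = ↑w ∧ B.WWord w' α α' ∧ R α' β')

/-- Approximants by transfinite recursion: `≈₀` is the full relation,
`≈_{i+1} = Ψ(≈_i)` and `≈_λ = ⋂_{i<λ} ≈_i` at limit ordinals. -/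
noncomputable def Approx (F : (B.Proc → B.Proc → Prop) → (B.Proc → B.Proc → Prop))
    (o : Ordinal) : B.Proc → B.Proc → Prop :=
  Ordinal.limitRecOn o (fun _ _ => True) (fun _ R => F R)
    (fun _ _ ih α β => ∀ i hi, ih i hi α β)

/-- A deadlock: no visible step is possible. -/
def Deadlock (α : B.Proc) : Prop :=
  ∀ a α', B.Step a α α' → a = B.tau

/-- The norm of a process: least length of a word leading weakly to a deadlock
(`⊤ = ∞` if there is none). -/
noncomputable def norm (α : B.Proc) : ℕ∞ :=
  sInf {n : ℕ∞ | ∃ w δ, B.WWord w α δ ∧ B.Deadlock δ ∧ (w.length : ℕ∞) = n}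

/-- A normed description: every variable has finite norm. -/
def Normed : Prop := ∀ X : B.V, B.norm {X} ≠ ⊤

/-- Silent norm-preserving steps `α →₀ β`. -/
def Step0 (α β : B.Proc) : Prop :=
  B.Step B.tau α β ∧ B.norm α = B.norm β

/-- `⇒₀`: reflexive–transitive closure of silent norm-preserving steps. -/
def WTau0 : B.Proc → B.Proc → Prop :=
  Relation.ReflTransGen B.Step0

/-- No two distinct variables are redundant. -/
def NoRedundantVars : Prop :=
  ∀ X Y : B.V, X ≠ Y → ¬ (B.WTau0 {X} {Y} ∧ B.WTau0 {Y} {X})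

/-- A generator: a variable that can silently, norm-preservingly reproduce itself
together with some nonempty rest. -/
def IsGenerator (X : B.V) : Prop :=
  ∃ α : B.Proc, α ≠ 0 ∧ B.WTau0 {X} ({X} + α)

/-- A pure variable cannot vanish along `⇒₀`. -/
def IsPure (X : B.V) : Prop :=
  ∀ α : B.Proc, B.WTau0 {X} α → X ∈ α

end BPP


inductive V17 : Type
  | X1 | Y1 | Z1 | W1 | S1 | X0 | Y0 | Z0 | A
deriving DecidableEq

instance : Fintype V17 :=
  ⟨{V17.X1, V17.Y1, V17.Z1, V17.W1, V17.S1, V17.X0, V17.Y0, V17.Z0, V17.A},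
    fun x => by cases x <;> decide⟩

inductive A17 : Type
  | tau | a | b | c
deriving DecidableEq

instance : Fintype A17 :=
  ⟨{A17.tau, A17.a, A17.b, A17.c}, fun x => by cases x <;> decide⟩

/-- Rules: X₁ →τ Y₁, X₁ →b Z₁, Y₁ →b W₁, Y₁ →τ Y₁A, Z₁ →τ W₁, Z₁ →τ Z₁A,
W₁ →a S₁, S₁ →τ S₁A, W₁ →c X₀, S₁ →c Y₀, X₀ →τ Y₀, X₀ →b Z₀, Y₀ →b ε,
X₀ →τ X₀A, Y₀ →τ Y₀A, Z₀ →τ Z₀A, Z₀ →τ ε, A →τ ε, A →a ε. -/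
def rules17 : List (V17 × A17 × Multiset V17) :=
  [(V17.X1, A17.tau, {V17.Y1}), (V17.X1, A17.b, {V17.Z1}),
   (V17.Y1, A17.b, {V17.W1}), (V17.Y1, A17.tau, {V17.Y1, V17.A}),
   (V17.Z1, A17.tau, {V17.W1}), (V17.Z1, A17.tau, {V17.Z1, V17.A}),
   (V17.W1, A17.a, {V17.S1}), (V17.S1, A17.tau, {V17.S1, V17.A}),
   (V17.W1, A17.c, {V17.X0}), (V17.S1, A17.c, {V17.Y0}),
   (V17.X0, A17.tau, {V17.Y0}), (V17.X0, A17.b, {V17.Z0}),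
   (V17.Y0, A17.b, 0), (V17.X0, A17.tau, {V17.X0, V17.A}),
   (V17.Y0, A17.tau, {V17.Y0, V17.A}), (V17.Z0, A17.tau, {V17.Z0, V17.A}),
   (V17.Z0, A17.tau, 0), (V17.A, A17.tau, 0), (V17.A, A17.a, 0)]

def B17 : BPP :=
  { V := V17, Act := A17, finV := inferInstance, finAct := inferInstance,
    tau := A17.tau, T := {r | r ∈ rules17}, finT := rules17.finite_toSet }


open V17 A17

abbrev S9 := Option V17 × ℕ

def pr (s : S9) : Multiset V17 :=
  (match s.1 with | none => 0 | some v => {v}) + Multiset.replicate s.2 V17.A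

lemma pr_none (n : ℕ) : pr (none, n) = Multiset.replicate n V17.A := by
  simp [pr]

lemma pr_some (v : V17) (n : ℕ) : pr (some v, n) = v ::ₘ Multiset.replicate n V17.A := by
  simp [pr, Multiset.singleton_add]

lemma pr_succ (o : Option V17) (n : ℕ) : pr (o, n+1) = V17.A ::ₘ pr (o, n) := by
  cases o with
  | none => simp [pr_none, Multiset.replicate_succ]
  | some v => simp [pr_some, Multiset.replicate_succ, Multiset.cons_swap]

/-- Abstract single-step relation on shapes. -/
def AStep (x : A17) (s t : S9) : Prop :=
  match x with
  | A17.tau =>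
      (s.1 = t.1 ∧ s.2 = t.2 + 1)
    ∨ (s.1 = some A ∧ t.1 = none ∧ t.2 = s.2)
    ∨ (s.1 = some X1 ∧ t.1 = some Y1 ∧ t.2 = s.2)
    ∨ (s.1 = some Y1 ∧ t.1 = some Y1 ∧ t.2 = s.2 + 1)
    ∨ (s.1 = some Z1 ∧ t.1 = some W1 ∧ t.2 = s.2)
    ∨ (s.1 = some Z1 ∧ t.1 = some Z1 ∧ t.2 = s.2 + 1)
    ∨ (s.1 = some S1 ∧ t.1 = some S1 ∧ t.2 = s.2 + 1)
    ∨ (s.1 = some X0 ∧ t.1 = some Y0 ∧ t.2 = s.2)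
    ∨ (s.1 = some X0 ∧ t.1 = some X0 ∧ t.2 = s.2 + 1)
    ∨ (s.1 = some Y0 ∧ t.1 = some Y0 ∧ t.2 = s.2 + 1)
    ∨ (s.1 = some Z0 ∧ t.1 = some Z0 ∧ t.2 = s.2 + 1)
    ∨ (s.1 = some Z0 ∧ t.1 = none ∧ t.2 = s.2)
  | A17.a =>
      (s.1 = t.1 ∧ s.2 = t.2 + 1)
    ∨ (s.1 = some A ∧ t.1 = none ∧ t.2 = s.2)
    ∨ (s.1 = some W1 ∧ t.1 = some S1 ∧ t.2 = s.2)
  | A17.b =>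
      (s.1 = some X1 ∧ t.1 = some Z1 ∧ t.2 = s.2)
    ∨ (s.1 = some Y1 ∧ t.1 = some W1 ∧ t.2 = s.2)
    ∨ (s.1 = some X0 ∧ t.1 = some Z0 ∧ t.2 = s.2)
    ∨ (s.1 = some Y0 ∧ t.1 = none ∧ t.2 = s.2)
  | A17.c =>
      (s.1 = some W1 ∧ t.1 = some X0 ∧ t.2 = s.2)
    ∨ (s.1 = some S1 ∧ t.1 = some Y0 ∧ t.2 = s.2)

lemma mem_T_iff (r : V17 × A17 × Multiset V17) : r ∈ B17.T ↔ r ∈ rules17 := Iff.rfl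

lemma pr_eq_cons {s : S9} {X : V17} {δ : Multiset V17} :
    pr s = X ::ₘ δ ↔
      (s.1 = some X ∧ δ = Multiset.replicate s.2 V17.A) ∨
      (X = V17.A ∧ ∃ m, s.2 = m + 1 ∧ δ = pr (s.1, m)) := by
  obtain ⟨o, n⟩ := s
  constructor
  · intro h
    cases o with
    | none =>
      rw [pr_none] at h
      have hX : X ∈ Multiset.replicate n V17.A := by rw [h]; exact Multiset.mem_cons_self _ _
      have hXA : X = V17.A := Multiset.eq_of_mem_replicate hX
      subst hXA
      cases n with
      | zero => simp at h
      | succ m =>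
        right
        refine ⟨rfl, m, rfl, ?_⟩
        rw [Multiset.replicate_succ] at h
        have := (Multiset.cons_inj_right (V17.A)).mp h.symm
        simp [pr_none, this]
    | some v =>
      rw [pr_some] at h
      rcases Multiset.cons_eq_cons.mp h with ⟨h1, h2⟩ | ⟨hne, cs, h1, h2⟩
      · left; exact ⟨by rw [h1], h2.symm⟩
      · -- replicate n A = X ::ₘ cs
        have hX : X ∈ Multiset.replicate n V17.A := by rw [h1]; exact Multiset.mem_cons_self _ _
        have hXA : X = V17.A := Multiset.eq_of_mem_replicate hX
        subst hXA
        cases n with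
        | zero => simp at h1
        | succ m =>
          right
          refine ⟨rfl, m, rfl, ?_⟩
          rw [Multiset.replicate_succ] at h1
          have := (Multiset.cons_inj_right (V17.A)).mp h1
          rw [h2, ← this, pr_some]
  · rintro (⟨h1, h2⟩ | ⟨hXA, m, hm, hδ⟩)
    · cases h1; rw [pr_some, h2]
    · subst hXA hδ
      simp only at hm ⊢
      rw [hm, pr_succ]

lemma prode (w : V17) (n : ℕ) :
    ({w} : Multiset V17) + Multiset.replicate n V17.A = pr (some w, n) := rfl

lemma prode2 (w : V17) (n : ℕ) :
    ({w, V17.A} : Multiset V17) + Multiset.replicate n V17.A = pr (some w, n+1) := by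
  simp [pr_some, Multiset.insert_eq_cons, Multiset.cons_add, Multiset.replicate_succ]

lemma prode0 (n : ℕ) :
    (0 : Multiset V17) + Multiset.replicate n V17.A = pr (none, n) := by
  simp [pr_none]

lemma mk_step {X : V17} {γ : Multiset V17} (x : A17) (h : (X, x, γ) ∈ rules17)
    (δ : Multiset V17) : B17.Step x (X ::ₘ δ) (γ + δ) := ⟨X, γ, δ, h, rfl, rfl⟩

lemma astep_step {x : A17} {s t : S9} (h : AStep x s t) : B17.Step x (pr s) (pr t) := by
  obtain ⟨o, n⟩ := s
  obtain ⟨o', n'⟩ := t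
  have main : ∀ (v w : V17) (γ : Multiset V17), (v, x, γ) ∈ rules17 → o = some v →
      γ + Multiset.replicate n V17.A = pr (o', n') → B17.Step x (pr (o, n)) (pr (o', n')) := by
    rintro v w γ hr rfl hγ
    rw [pr_some, ← hγ]; exact mk_step x hr _
  cases x <;> simp only [AStep] at h
  case tau =>
    rcases h with ⟨h1, h2⟩ | ⟨h1, h2, h3⟩ | ⟨h1, h2, h3⟩ | ⟨h1, h2, h3⟩ | ⟨h1, h2, h3⟩ |
      ⟨h1, h2, h3⟩ | ⟨h1, h2, h3⟩ | ⟨h1, h2, h3⟩ | ⟨h1, h2, h3⟩ | ⟨h1, h2, h3⟩ |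
      ⟨h1, h2, h3⟩ | ⟨h1, h2, h3⟩
    · subst h1 h2
      rw [pr_succ]
      have := mk_step A17.tau (show (V17.A, A17.tau, 0) ∈ rules17 by simp [rules17]) (pr (o, n'))
      rw [zero_add] at this; exact this
    · subst h1 h2 h3
      rw [pr_some, pr_none]
      have := mk_step A17.tau (show (V17.A, A17.tau, 0) ∈ rules17 by simp [rules17])
        (Multiset.replicate n' V17.A)
      rw [zero_add] at this; exact this
    · subst h1 h2 h3
      exact main _ V17.A _ (by simp [rules17]) rfl (prode _ _)
    · subst h1 h2 h3
      exact main _ V17.A _ (by simp [rules17]) rfl (prode2 _ _)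
    · subst h1 h2 h3
      exact main _ V17.A _ (by simp [rules17]) rfl (prode _ _)
    · subst h1 h2 h3
      exact main _ V17.A _ (by simp [rules17]) rfl (prode2 _ _)
    · subst h1 h2 h3
      exact main _ V17.A _ (by simp [rules17]) rfl (prode2 _ _)
    · subst h1 h2 h3
      exact main _ V17.A _ (by simp [rules17]) rfl (prode _ _)
    · subst h1 h2 h3
      exact main _ V17.A _ (by simp [rules17]) rfl (prode2 _ _)
    · subst h1 h2 h3
      exact main _ V17.A _ (by simp [rules17]) rfl (prode2 _ _)
    · subst h1 h2 h3
      exact main _ V17.A _ (by simp [rules17]) rfl (prode2 _ _)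
    · subst h1 h2 h3
      exact main _ V17.A _ (by simp [rules17]) rfl (prode0 _)
  case a =>
    rcases h with ⟨h1, h2⟩ | ⟨h1, h2, h3⟩ | ⟨h1, h2, h3⟩
    · subst h1 h2
      rw [pr_succ]
      have := mk_step A17.a (show (V17.A, A17.a, 0) ∈ rules17 by simp [rules17]) (pr (o, n'))
      rw [zero_add] at this; exact this
    · subst h1 h2 h3
      rw [pr_some, pr_none]
      have := mk_step A17.a (show (V17.A, A17.a, 0) ∈ rules17 by simp [rules17])
        (Multiset.replicate n' V17.A)
      rw [zero_add] at this; exact this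
    · subst h1 h2 h3
      exact main _ V17.A _ (by simp [rules17]) rfl (prode _ _)
  case b =>
    rcases h with ⟨h1, h2, h3⟩ | ⟨h1, h2, h3⟩ | ⟨h1, h2, h3⟩ | ⟨h1, h2, h3⟩
    · subst h1 h2 h3
      exact main _ V17.A _ (by simp [rules17]) rfl (prode _ _)
    · subst h1 h2 h3
      exact main _ V17.A _ (by simp [rules17]) rfl (prode _ _)
    · subst h1 h2 h3
      exact main _ V17.A _ (by simp [rules17]) rfl (prode _ _)
    · subst h1 h2 h3
      exact main _ V17.A _ (by simp [rules17]) rfl (prode0 _)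
  case c =>
    rcases h with ⟨h1, h2, h3⟩ | ⟨h1, h2, h3⟩
    · subst h1 h2 h3
      exact main _ V17.A _ (by simp [rules17]) rfl (prode _ _)
    · subst h1 h2 h3
      exact main _ V17.A _ (by simp [rules17]) rfl (prode _ _)


lemma step_pr_fwd {x : A17} {s : S9} {β : Multiset V17} (h : B17.Step x (pr s) β) :
    ∃ t, AStep x s t ∧ β = pr t := by
  obtain ⟨X, γ, δ, hmem, hcons, hβ⟩ := h
  obtain ⟨o, n⟩ := s
  simp only [B17, Set.mem_setOf_eq, rules17, List.mem_cons, List.not_mem_nil, or_false,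
    Prod.mk.injEq] at hmem
  rcases hmem with ⟨rfl,rfl,rfl⟩|⟨rfl,rfl,rfl⟩|⟨rfl,rfl,rfl⟩|⟨rfl,rfl,rfl⟩|⟨rfl,rfl,rfl⟩|
    ⟨rfl,rfl,rfl⟩|⟨rfl,rfl,rfl⟩|⟨rfl,rfl,rfl⟩|⟨rfl,rfl,rfl⟩|⟨rfl,rfl,rfl⟩|⟨rfl,rfl,rfl⟩|
    ⟨rfl,rfl,rfl⟩|⟨rfl,rfl,rfl⟩|⟨rfl,rfl,rfl⟩|⟨rfl,rfl,rfl⟩|⟨rfl,rfl,rfl⟩|⟨rfl,rfl,rfl⟩|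
    ⟨rfl,rfl,rfl⟩|⟨rfl,rfl,rfl⟩
  · rcases pr_eq_cons.mp hcons with ⟨h1, h2⟩ | ⟨hA, m, hm, hδ⟩
    · subst h1 h2
      exact ⟨(some V17.Y1, n), by simp [AStep], by rw [hβ]; exact prode _ _⟩
    · simp at hA
  · rcases pr_eq_cons.mp hcons with ⟨h1, h2⟩ | ⟨hA, m, hm, hδ⟩
    · subst h1 h2
      exact ⟨(some V17.Z1, n), by simp [AStep], by rw [hβ]; exact prode _ _⟩
    · simp at hA
  · rcases pr_eq_cons.mp hcons with ⟨h1, h2⟩ | ⟨hA, m, hm, hδ⟩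
    · subst h1 h2
      exact ⟨(some V17.W1, n), by simp [AStep], by rw [hβ]; exact prode _ _⟩
    · simp at hA
  · rcases pr_eq_cons.mp hcons with ⟨h1, h2⟩ | ⟨hA, m, hm, hδ⟩
    · subst h1 h2
      exact ⟨(some V17.Y1, n+1), by simp [AStep], by rw [hβ]; exact prode2 _ _⟩
    · simp at hA
  · rcases pr_eq_cons.mp hcons with ⟨h1, h2⟩ | ⟨hA, m, hm, hδ⟩
    · subst h1 h2
      exact ⟨(some V17.W1, n), by simp [AStep], by rw [hβ]; exact prode _ _⟩
    · simp at hA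
  · rcases pr_eq_cons.mp hcons with ⟨h1, h2⟩ | ⟨hA, m, hm, hδ⟩
    · subst h1 h2
      exact ⟨(some V17.Z1, n+1), by simp [AStep], by rw [hβ]; exact prode2 _ _⟩
    · simp at hA
  · rcases pr_eq_cons.mp hcons with ⟨h1, h2⟩ | ⟨hA, m, hm, hδ⟩
    · subst h1 h2
      exact ⟨(some V17.S1, n), by simp [AStep], by rw [hβ]; exact prode _ _⟩
    · simp at hA
  · rcases pr_eq_cons.mp hcons with ⟨h1, h2⟩ | ⟨hA, m, hm, hδ⟩
    · subst h1 h2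
      exact ⟨(some V17.S1, n+1), by simp [AStep], by rw [hβ]; exact prode2 _ _⟩
    · simp at hA
  · rcases pr_eq_cons.mp hcons with ⟨h1, h2⟩ | ⟨hA, m, hm, hδ⟩
    · subst h1 h2
      exact ⟨(some V17.X0, n), by simp [AStep], by rw [hβ]; exact prode _ _⟩
    · simp at hA
  · rcases pr_eq_cons.mp hcons with ⟨h1, h2⟩ | ⟨hA, m, hm, hδ⟩
    · subst h1 h2
      exact ⟨(some V17.Y0, n), by simp [AStep], by rw [hβ]; exact prode _ _⟩
    · simp at hA
  · rcases pr_eq_cons.mp hcons with ⟨h1, h2⟩ | ⟨hA, m, hm, hδ⟩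
    · subst h1 h2
      exact ⟨(some V17.Y0, n), by simp [AStep], by rw [hβ]; exact prode _ _⟩
    · simp at hA
  · rcases pr_eq_cons.mp hcons with ⟨h1, h2⟩ | ⟨hA, m, hm, hδ⟩
    · subst h1 h2
      exact ⟨(some V17.Z0, n), by simp [AStep], by rw [hβ]; exact prode _ _⟩
    · simp at hA
  · rcases pr_eq_cons.mp hcons with ⟨h1, h2⟩ | ⟨hA, m, hm, hδ⟩
    · subst h1 h2
      exact ⟨(none, n), by simp [AStep], by rw [hβ]; exact prode0 _⟩
    · simp at hA
  · rcases pr_eq_cons.mp hcons with ⟨h1, h2⟩ | ⟨hA, m, hm, hδ⟩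
    · subst h1 h2
      exact ⟨(some V17.X0, n+1), by simp [AStep], by rw [hβ]; exact prode2 _ _⟩
    · simp at hA
  · rcases pr_eq_cons.mp hcons with ⟨h1, h2⟩ | ⟨hA, m, hm, hδ⟩
    · subst h1 h2
      exact ⟨(some V17.Y0, n+1), by simp [AStep], by rw [hβ]; exact prode2 _ _⟩
    · simp at hA
  · rcases pr_eq_cons.mp hcons with ⟨h1, h2⟩ | ⟨hA, m, hm, hδ⟩
    · subst h1 h2
      exact ⟨(some V17.Z0, n+1), by simp [AStep], by rw [hβ]; exact prode2 _ _⟩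
    · simp at hA
  · rcases pr_eq_cons.mp hcons with ⟨h1, h2⟩ | ⟨hA, m, hm, hδ⟩
    · subst h1 h2
      exact ⟨(none, n), by simp [AStep], by rw [hβ]; exact prode0 _⟩
    · simp at hA
  · rcases pr_eq_cons.mp hcons with ⟨h1, h2⟩ | ⟨hA, m, hm, hδ⟩
    · subst h1 h2
      exact ⟨(none, n), by simp [AStep], by rw [hβ]; exact prode0 _⟩
    · exact ⟨(o, m), Or.inl ⟨rfl, hm⟩, by rw [hβ, hδ]; exact zero_add _⟩
  · rcases pr_eq_cons.mp hcons with ⟨h1, h2⟩ | ⟨hA, m, hm, hδ⟩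
    · subst h1 h2
      exact ⟨(none, n), by simp [AStep], by rw [hβ]; exact prode0 _⟩
    · exact ⟨(o, m), Or.inl ⟨rfl, hm⟩, by rw [hβ, hδ]; exact zero_add _⟩

/-- Abstract reflexive-transitive τ-closure. -/
def ATau : S9 → S9 → Prop := Relation.ReflTransGen (AStep A17.tau)

lemma wtau_pr_fwd {s : S9} {β : Multiset V17} (h : B17.WTau (pr s) β) :
    ∃ t, ATau s t ∧ β = pr t := by
  induction h with
  | refl => exact ⟨s, Relation.ReflTransGen.refl, rfl⟩
  | tail _ hstep ih =>
    obtain ⟨t, hat, rfl⟩ := ih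
    obtain ⟨u, hau, rfl⟩ := step_pr_fwd hstep
    exact ⟨u, hat.tail hau, rfl⟩

lemma wtau_pr_bwd {s t : S9} (h : ATau s t) : B17.WTau (pr s) (pr t) := by
  induction h with
  | refl => exact Relation.ReflTransGen.refl
  | tail _ hstep ih => exact ih.tail (astep_step hstep)

/-- The τ-closure table. -/
def Cl (s t : S9) : Prop :=
  match s.1, t.1 with
  | none, none => t.2 ≤ s.2
  | some V17.A, none => t.2 ≤ s.2
  | some V17.A, some V17.A => t.2 ≤ s.2
  | some V17.W1, some V17.W1 => t.2 ≤ s.2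
  | some V17.S1, some V17.S1 => True
  | some V17.Y1, some V17.Y1 => True
  | some V17.Y0, some V17.Y0 => True
  | some V17.X0, some V17.X0 => True
  | some V17.X0, some V17.Y0 => True
  | some V17.X1, some V17.X1 => t.2 ≤ s.2
  | some V17.X1, some V17.Y1 => True
  | some V17.Z1, some V17.Z1 => True
  | some V17.Z1, some V17.W1 => True
  | some V17.Z0, some V17.Z0 => True
  | some V17.Z0, none => True
  | _, _ => False

lemma Cl.refl (s : S9) : Cl s s := by
  obtain ⟨o, n⟩ := s
  rcases o with _ | v
  · simp [Cl]
  · cases v <;> simp [Cl]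

lemma cl_step {s t u : S9} (hst : Cl s t) (htu : AStep A17.tau t u) : Cl s u := by
  obtain ⟨os, ns⟩ := s; obtain ⟨ot, nt⟩ := t; obtain ⟨ou, nu⟩ := u
  rcases htu with ⟨h1, h2⟩ | ⟨h1, h2, h3⟩ | ⟨h1, h2, h3⟩ | ⟨h1, h2, h3⟩ | ⟨h1, h2, h3⟩ |
    ⟨h1, h2, h3⟩ | ⟨h1, h2, h3⟩ | ⟨h1, h2, h3⟩ | ⟨h1, h2, h3⟩ | ⟨h1, h2, h3⟩ |
    ⟨h1, h2, h3⟩ | ⟨h1, h2, h3⟩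
  · subst h1
    simp only at h2 ⊢
    subst h2
    rcases os with _ | (_|_|_|_|_|_|_|_|_) <;> rcases ot with _ | (_|_|_|_|_|_|_|_|_) <;>
      simp_all [Cl] <;> omega
  all_goals subst h1 h2 h3
  all_goals rcases os with _ | (_|_|_|_|_|_|_|_|_) <;> simp_all [Cl] <;> omega

lemma atau_cl {s t : S9} (h : ATau s t) : Cl s t := by
  induction h with
  | refl => exact Cl.refl s
  | tail _ hstep ih => exact cl_step ih hstep

lemma atau_down {o : Option V17} {n m : ℕ} (h : m ≤ n) : ATau (o, n) (o, m) := by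
  induction n with
  | zero => cases Nat.le_zero.mp h; exact Relation.ReflTransGen.refl
  | succ k ih =>
    rcases Nat.lt_or_ge m (k+1) with hlt | hge
    · exact Relation.ReflTransGen.head
        (show AStep A17.tau (o, k+1) (o, k) from Or.inl ⟨rfl, rfl⟩)
        (ih (Nat.lt_succ_iff.mp hlt))
    · cases Nat.le_antisymm h hge; exact Relation.ReflTransGen.refl

lemma atau_up {v : V17} (hgen : ∀ k, AStep A17.tau (some v, k) (some v, k+1))
    {n m : ℕ} (h : n ≤ m) : ATau (some v, n) (some v, m) := by
  induction m with
  | zero => cases Nat.le_zero.mp h; exact Relation.ReflTransGen.refl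
  | succ k ih =>
    rcases Nat.lt_or_ge n (k+1) with hlt | hge
    · exact (ih (Nat.lt_succ_iff.mp hlt)).tail (hgen k)
    · cases Nat.le_antisymm h hge; exact Relation.ReflTransGen.refl

lemma atau_any {v : V17} (hgen : ∀ k, AStep A17.tau (some v, k) (some v, k+1))
    (n m : ℕ) : ATau (some v, n) (some v, m) := by
  rcases Nat.le_total n m with h | h
  · exact atau_up hgen h
  · exact atau_down h

lemma gen_Y1 : ∀ k, AStep A17.tau (some V17.Y1, k) (some V17.Y1, k+1) := by
  intro k; simp [AStep]
lemma gen_Z1 : ∀ k, AStep A17.tau (some V17.Z1, k) (some V17.Z1, k+1) := by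
  intro k; simp [AStep]
lemma gen_S1 : ∀ k, AStep A17.tau (some V17.S1, k) (some V17.S1, k+1) := by
  intro k; simp [AStep]
lemma gen_X0 : ∀ k, AStep A17.tau (some V17.X0, k) (some V17.X0, k+1) := by
  intro k; simp [AStep]
lemma gen_Y0 : ∀ k, AStep A17.tau (some V17.Y0, k) (some V17.Y0, k+1) := by
  intro k; simp [AStep]
lemma gen_Z0 : ∀ k, AStep A17.tau (some V17.Z0, k) (some V17.Z0, k+1) := by
  intro k; simp [AStep]

lemma cl_atau {s t : S9} (h : Cl s t) : ATau s t := by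
  obtain ⟨os, ns⟩ := s; obtain ⟨ot, nt⟩ := t
  rcases os with _ | (_|_|_|_|_|_|_|_|_) <;> rcases ot with _ | (_|_|_|_|_|_|_|_|_) <;>
    simp only [Cl] at h <;> try exact h.elim
  all_goals first
  | exact atau_down h
  | exact atau_any gen_Y1 _ _
  | exact atau_any gen_Z1 _ _
  | exact atau_any gen_S1 _ _
  | exact atau_any gen_X0 _ _
  | exact atau_any gen_Y0 _ _
  | exact atau_any gen_Z0 _ _
  | exact Relation.ReflTransGen.head
      (show AStep A17.tau (some V17.X1, ns) (some V17.Y1, ns) by simp [AStep])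
      (atau_any gen_Y1 _ _)
  | exact (atau_any gen_X0 ns nt).tail
      (show AStep A17.tau (some V17.X0, nt) (some V17.Y0, nt) by simp [AStep])
  | exact (atau_any gen_Z1 ns nt).tail
      (show AStep A17.tau (some V17.Z1, nt) (some V17.W1, nt) by simp [AStep])
  | exact (atau_any gen_Z0 ns nt).tail
      (show AStep A17.tau (some V17.Z0, nt) (none, nt) by simp [AStep])
  | exact Relation.ReflTransGen.head
      (show AStep A17.tau (some V17.A, ns) (none, ns) by simp [AStep])
      (atau_down h)

lemma atau_iff_cl {s t : S9} : ATau s t ↔ Cl s t := ⟨atau_cl, cl_atau⟩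

/-- Abstract weak step. -/
def AW (x : A17) (s t : S9) : Prop :=
  if x = A17.tau then Cl s t
  else ∃ u v, Cl s u ∧ AStep x u v ∧ Cl v t

lemma wtau_pr_iff {s : S9} {β : Multiset V17} :
    B17.WTau (pr s) β ↔ ∃ t, Cl s t ∧ β = pr t := by
  constructor
  · intro h
    obtain ⟨t, hat, rfl⟩ := wtau_pr_fwd h
    exact ⟨t, atau_cl hat, rfl⟩
  · rintro ⟨t, hcl, rfl⟩
    exact wtau_pr_bwd (cl_atau hcl)

lemma btau : B17.tau = A17.tau := rfl

lemma wstep_pr_iff {x : A17} {s : S9} {β : Multiset V17} :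
    B17.WStep x (pr s) β ↔ ∃ t, AW x s t ∧ β = pr t := by
  by_cases hx : x = A17.tau
  · subst hx
    constructor
    · rintro (⟨-, h⟩ | ⟨hne, -⟩)
      · obtain ⟨t, hcl, rfl⟩ := wtau_pr_iff.mp h
        exact ⟨t, by simp [AW, hcl], rfl⟩
      · exact absurd btau.symm hne
    · rintro ⟨t, hAW, rfl⟩
      simp only [AW, if_pos rfl] at hAW
      exact Or.inl ⟨rfl, wtau_pr_iff.mpr ⟨t, hAW, rfl⟩⟩
  · constructor
    · rintro (⟨heq, -⟩ | ⟨-, γ, δ, h1, h2, h3⟩)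
      · exact absurd (heq.trans btau) hx
      · obtain ⟨u, hcu, rfl⟩ := wtau_pr_iff.mp h1
        obtain ⟨v, hav, rfl⟩ := step_pr_fwd h2
        obtain ⟨t, hct, rfl⟩ := wtau_pr_iff.mp h3
        exact ⟨t, by simp only [AW, if_neg hx]; exact ⟨u, v, hcu, hav, hct⟩, rfl⟩
    · rintro ⟨t, hAW, rfl⟩
      simp only [AW, if_neg hx] at hAW
      obtain ⟨u, v, hcu, hav, hct⟩ := hAW
      refine Or.inr ⟨fun h => hx (h.symm ▸ rfl), pr u, pr v, ?_, astep_step hav, ?_⟩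
      · exact wtau_pr_iff.mpr ⟨u, hcu, rfl⟩
      · exact wtau_pr_iff.mpr ⟨t, hct, rfl⟩

/-- The weak-step table. -/
def WT : A17 → S9 → S9 → Prop
  | A17.tau, s, t => Cl s t
  | A17.a, s, t =>
    match s.1, t.1 with
    | none, none => t.2 < s.2
    | some V17.A, none => t.2 ≤ s.2
    | some V17.A, some V17.A => t.2 < s.2
    | some V17.X1, some V17.X1 => t.2 < s.2
    | some V17.X1, some V17.Y1 => True
    | some V17.Y1, some V17.Y1 => True
    | some V17.Z1, some V17.Z1 => True
    | some V17.Z1, some V17.W1 => True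
    | some V17.Z1, some V17.S1 => True
    | some V17.W1, some V17.W1 => t.2 < s.2
    | some V17.W1, some V17.S1 => True
    | some V17.S1, some V17.S1 => True
    | some V17.X0, some V17.X0 => True
    | some V17.X0, some V17.Y0 => True
    | some V17.Y0, some V17.Y0 => True
    | some V17.Z0, some V17.Z0 => True
    | some V17.Z0, none => True
    | _, _ => False
  | A17.b, s, t =>
    match s.1, t.1 with
    | some V17.X1, some V17.Z1 => True
    | some V17.X1, some V17.W1 => True
    | some V17.Y1, some V17.W1 => True
    | some V17.X0, some V17.Z0 => True
    | some V17.X0, none => True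
    | some V17.Y0, none => True
    | _, _ => False
  | A17.c, s, t =>
    match s.1, t.1 with
    | some V17.Z1, some V17.X0 => True
    | some V17.Z1, some V17.Y0 => True
    | some V17.W1, some V17.X0 => True
    | some V17.W1, some V17.Y0 => True
    | some V17.S1, some V17.Y0 => True
    | _, _ => False

lemma AW_iff {x : A17} {s t : S9} : AW x s t ↔ WT x s t := by
  obtain ⟨os, ns⟩ := s; obtain ⟨ot, nt⟩ := t
  cases x
  case tau => simp [AW, WT]
  case a =>
    constructor
    · rintro ⟨⟨ou, nu⟩, ⟨ov, nv⟩, hcu, hav, hcv⟩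
      rcases os with _ | (_|_|_|_|_|_|_|_|_) <;> rcases ou with _ | (_|_|_|_|_|_|_|_|_) <;>
        simp only [Cl] at hcu <;> try exact hcu.elim
      all_goals rcases ov with _ | (_|_|_|_|_|_|_|_|_) <;> simp only [AStep] at hav <;>
        try exact hav.elim
      all_goals rcases ot with _ | (_|_|_|_|_|_|_|_|_) <;> simp only [Cl] at hcv <;>
        try exact hcv.elim
      all_goals simp_all [WT] <;> omega
    · intro h
      rcases os with _ | (_|_|_|_|_|_|_|_|_) <;> rcases ot with _ | (_|_|_|_|_|_|_|_|_) <;>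
        simp only [WT] at h <;> try exact h.elim
      · exact ⟨(none, nt+1), (none, nt), by simp [Cl] <;> omega, by simp [AStep], by simp [Cl]⟩
      · exact ⟨(some V17.X1, nt+1), (some V17.X1, nt), by simp [Cl] <;> omega, by simp [AStep], by simp [Cl]⟩
      · exact ⟨(some V17.Y1, nt+1), (some V17.Y1, nt), by simp [Cl] <;> omega, by simp [AStep], by simp [Cl]⟩
      · exact ⟨(some V17.Y1, nt+1), (some V17.Y1, nt), by simp [Cl] <;> omega, by simp [AStep], by simp [Cl]⟩
      · exact ⟨(some V17.Z1, nt+1), (some V17.Z1, nt), by simp [Cl] <;> omega, by simp [AStep], by simp [Cl]⟩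
      · exact ⟨(some V17.W1, nt+1), (some V17.W1, nt), by simp [Cl] <;> omega, by simp [AStep], by simp [Cl]⟩
      · exact ⟨(some V17.W1, nt), (some V17.S1, nt), by simp [Cl] <;> omega, by simp [AStep], by simp [Cl]⟩
      · exact ⟨(some V17.W1, nt+1), (some V17.W1, nt), by simp [Cl] <;> omega, by simp [AStep], by simp [Cl]⟩
      · exact ⟨(some V17.W1, 0), (some V17.S1, 0), by simp [Cl] <;> omega, by simp [AStep], by simp [Cl]⟩
      · exact ⟨(some V17.S1, nt+1), (some V17.S1, nt), by simp [Cl] <;> omega, by simp [AStep], by simp [Cl]⟩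
      · exact ⟨(some V17.X0, nt+1), (some V17.X0, nt), by simp [Cl] <;> omega, by simp [AStep], by simp [Cl]⟩
      · exact ⟨(some V17.Y0, nt+1), (some V17.Y0, nt), by simp [Cl] <;> omega, by simp [AStep], by simp [Cl]⟩
      · exact ⟨(some V17.Y0, nt+1), (some V17.Y0, nt), by simp [Cl] <;> omega, by simp [AStep], by simp [Cl]⟩
      · exact ⟨(none, nt+1), (none, nt), by simp [Cl] <;> omega, by simp [AStep], by simp [Cl]⟩
      · exact ⟨(some V17.Z0, nt+1), (some V17.Z0, nt), by simp [Cl] <;> omega, by simp [AStep], by simp [Cl]⟩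
      · exact ⟨(some V17.A, nt), (none, nt), by simp [Cl] <;> omega, by simp [AStep], by simp [Cl]⟩
      · exact ⟨(some V17.A, nt+1), (some V17.A, nt), by simp [Cl] <;> omega, by simp [AStep], by simp [Cl]⟩
  case b =>
    constructor
    · rintro ⟨⟨ou, nu⟩, ⟨ov, nv⟩, hcu, hav, hcv⟩
      rcases os with _ | (_|_|_|_|_|_|_|_|_) <;> rcases ou with _ | (_|_|_|_|_|_|_|_|_) <;>
        simp only [Cl] at hcu <;> try exact hcu.elim
      all_goals rcases ov with _ | (_|_|_|_|_|_|_|_|_) <;> simp only [AStep] at hav <;>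
        try exact hav.elim
      all_goals rcases ot with _ | (_|_|_|_|_|_|_|_|_) <;> simp only [Cl] at hcv <;>
        try exact hcv.elim
      all_goals simp_all [WT] <;> omega
    · intro h
      rcases os with _ | (_|_|_|_|_|_|_|_|_) <;> rcases ot with _ | (_|_|_|_|_|_|_|_|_) <;>
        simp only [WT] at h <;> try exact h.elim
      · exact ⟨(some V17.X1, ns), (some V17.Z1, ns), by simp [Cl] <;> omega, by simp [AStep], by simp [Cl]⟩
      · exact ⟨(some V17.Y1, nt), (some V17.W1, nt), by simp [Cl] <;> omega, by simp [AStep], by simp [Cl]⟩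
      · exact ⟨(some V17.Y1, nt), (some V17.W1, nt), by simp [Cl] <;> omega, by simp [AStep], by simp [Cl]⟩
      · exact ⟨(some V17.Y0, nt), (none, nt), by simp [Cl] <;> omega, by simp [AStep], by simp [Cl]⟩
      · exact ⟨(some V17.X0, ns), (some V17.Z0, ns), by simp [Cl] <;> omega, by simp [AStep], by simp [Cl]⟩
      · exact ⟨(some V17.Y0, nt), (none, nt), by simp [Cl] <;> omega, by simp [AStep], by simp [Cl]⟩
  case c =>
    constructor
    · rintro ⟨⟨ou, nu⟩, ⟨ov, nv⟩, hcu, hav, hcv⟩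
      rcases os with _ | (_|_|_|_|_|_|_|_|_) <;> rcases ou with _ | (_|_|_|_|_|_|_|_|_) <;>
        simp only [Cl] at hcu <;> try exact hcu.elim
      all_goals rcases ov with _ | (_|_|_|_|_|_|_|_|_) <;> simp only [AStep] at hav <;>
        try exact hav.elim
      all_goals rcases ot with _ | (_|_|_|_|_|_|_|_|_) <;> simp only [Cl] at hcv <;>
        try exact hcv.elim
      all_goals simp_all [WT] <;> omega
    · intro h
      rcases os with _ | (_|_|_|_|_|_|_|_|_) <;> rcases ot with _ | (_|_|_|_|_|_|_|_|_) <;>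
        simp only [WT] at h <;> try exact h.elim
      · exact ⟨(some V17.W1, 0), (some V17.X0, 0), by simp [Cl] <;> omega, by simp [AStep], by simp [Cl]⟩
      · exact ⟨(some V17.W1, 0), (some V17.X0, 0), by simp [Cl] <;> omega, by simp [AStep], by simp [Cl]⟩
      · exact ⟨(some V17.W1, 0), (some V17.X0, 0), by simp [Cl] <;> omega, by simp [AStep], by simp [Cl]⟩
      · exact ⟨(some V17.W1, 0), (some V17.X0, 0), by simp [Cl] <;> omega, by simp [AStep], by simp [Cl]⟩
      · exact ⟨(some V17.S1, 0), (some V17.Y0, 0), by simp [Cl] <;> omega, by simp [AStep], by simp [Cl]⟩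
  all_goals (simp only [AW, if_neg (by decide : ¬ _ = A17.tau)]; rfl)

/-- Base pairs for the finite-level approximant relations. -/
inductive GB : ℕ → S9 → S9 → Prop
  | xy (i : ℕ) : GB i (some V17.X1, 0) (some V17.Y1, 0)
  | zw (i m k : ℕ) : GB i (some V17.Z1, m) (some V17.W1, k)
  | ww (i j k : ℕ) : GB i (some V17.W1, j) (some V17.W1, k)
  | zs (i j m : ℕ) : GB i (some V17.Z1, j) (some V17.S1, m)
  | ws (i j m : ℕ) : GB i (some V17.W1, j) (some V17.S1, m)
  | x0y0 (i r s : ℕ) : GB i (some V17.X0, r) (some V17.Y0, s)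
  | z0e (i m k : ℕ) : i ≤ k → GB i (some V17.Z0, m) (none, k)
  | ee (i j k : ℕ) : i ≤ j → i ≤ k → GB i (none, j) (none, k)

def GA (i : ℕ) (s t : S9) : Prop := GB i s t ∨ GB i t s

/-- Base pairs for the `ω+n`-level approximant relations. -/
inductive HB : ℕ → S9 → S9 → Prop
  | xy (n : ℕ) : HB n (some V17.X1, 0) (some V17.Y1, 0)
  | zw (n m k : ℕ) : n ≤ k → HB n (some V17.Z1, m) (some V17.W1, k)
  | ww (n j k : ℕ) : n ≤ j → n ≤ k → HB n (some V17.W1, j) (some V17.W1, k)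

def HA (n : ℕ) (s t : S9) : Prop := HB n s t ∨ HB n t s

lemma GB_attack {i : ℕ} {s t : S9} (hp : GB (i+1) s t) {x : A17} {u : S9}
    (hu : WT x s u) : ∃ v, WT x t v ∧ (u = v ∨ GA i u v) := by
  obtain ⟨ou, nu⟩ := u
  cases hp with
  | xy =>
    cases x <;> rcases ou with _ | (_|_|_|_|_|_|_|_|_) <;> simp only [WT, Cl] at hu <;>
      first
      | exact absurd hu (by omega)
      | exact hu.elim
      | skip
    -- tau: X1 then Y1 ; a: Y1 ; b: Z1 then W1
    · obtain rfl : nu = 0 := Nat.le_zero.mp hu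
      exact ⟨(some V17.Y1, 0), by simp [WT, Cl], Or.inr (Or.inl (GB.xy i))⟩
    · exact ⟨(some V17.Y1, nu), by simp [WT, Cl], Or.inl rfl⟩
    · exact ⟨(some V17.Y1, nu), by simp [WT], Or.inl rfl⟩
    · exact ⟨(some V17.W1, 0), by simp [WT], Or.inr (Or.inl (GB.zw i nu 0))⟩
    · exact ⟨(some V17.W1, nu), by simp [WT], Or.inl rfl⟩
  | zw m k =>
    cases x <;> rcases ou with _ | (_|_|_|_|_|_|_|_|_) <;> simp only [WT, Cl] at hu <;>
      first
      | exact absurd hu (by omega)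
      | exact hu.elim
      | skip
    -- tau: Z1, W1 ; a: Z1, W1, S1 ; c: X0, Y0
    · exact ⟨(some V17.W1, k), by simp [WT, Cl], Or.inr (Or.inl (GB.zw i nu k))⟩
    · exact ⟨(some V17.W1, k), by simp [WT, Cl], Or.inr (Or.inl (GB.ww i nu k))⟩
    · exact ⟨(some V17.S1, 0), by simp [WT], Or.inr (Or.inl (GB.zs i nu 0))⟩
    · exact ⟨(some V17.S1, nu), by simp [WT], Or.inr (Or.inl (GB.ws i nu nu))⟩
    · exact ⟨(some V17.S1, nu), by simp [WT], Or.inl rfl⟩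
    · exact ⟨(some V17.X0, nu), by simp [WT], Or.inl rfl⟩
    · exact ⟨(some V17.Y0, nu), by simp [WT], Or.inl rfl⟩
  | ww j k =>
    cases x <;> rcases ou with _ | (_|_|_|_|_|_|_|_|_) <;> simp only [WT, Cl] at hu <;>
      first
      | exact absurd hu (by omega)
      | exact hu.elim
      | skip
    -- tau: W1 ; a: W1, S1 ; c: X0, Y0
    · exact ⟨(some V17.W1, k), by simp [WT, Cl], Or.inr (Or.inl (GB.ww i nu k))⟩
    · exact ⟨(some V17.S1, nu), by simp [WT], Or.inr (Or.inl (GB.ws i nu nu))⟩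
    · exact ⟨(some V17.S1, nu), by simp [WT], Or.inl rfl⟩
    · exact ⟨(some V17.X0, nu), by simp [WT], Or.inl rfl⟩
    · exact ⟨(some V17.Y0, nu), by simp [WT], Or.inl rfl⟩
  | zs j m =>
    cases x <;> rcases ou with _ | (_|_|_|_|_|_|_|_|_) <;> simp only [WT, Cl] at hu <;>
      first
      | exact absurd hu (by omega)
      | exact hu.elim
      | skip
    -- tau: Z1, W1 ; a: Z1, W1, S1 ; c: X0, Y0
    · exact ⟨(some V17.S1, m), by simp [WT, Cl], Or.inr (Or.inl (GB.zs i nu m))⟩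
    · exact ⟨(some V17.S1, nu), by simp [WT, Cl], Or.inr (Or.inl (GB.ws i nu nu))⟩
    · exact ⟨(some V17.S1, 0), by simp [WT], Or.inr (Or.inl (GB.zs i nu 0))⟩
    · exact ⟨(some V17.S1, nu), by simp [WT], Or.inr (Or.inl (GB.ws i nu nu))⟩
    · exact ⟨(some V17.S1, nu), by simp [WT], Or.inl rfl⟩
    · exact ⟨(some V17.Y0, nu), by simp [WT], Or.inr (Or.inl (GB.x0y0 i nu nu))⟩
    · exact ⟨(some V17.Y0, nu), by simp [WT], Or.inl rfl⟩
  | ws j m =>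
    cases x <;> rcases ou with _ | (_|_|_|_|_|_|_|_|_) <;> simp only [WT, Cl] at hu <;>
      first
      | exact absurd hu (by omega)
      | exact hu.elim
      | skip
    -- tau: W1 ; a: W1, S1 ; c: X0, Y0
    · exact ⟨(some V17.S1, m), by simp [WT, Cl], Or.inr (Or.inl (GB.ws i nu m))⟩
    · exact ⟨(some V17.S1, nu), by simp [WT], Or.inr (Or.inl (GB.ws i nu nu))⟩
    · exact ⟨(some V17.S1, nu), by simp [WT], Or.inl rfl⟩
    · exact ⟨(some V17.Y0, nu), by simp [WT], Or.inr (Or.inl (GB.x0y0 i nu nu))⟩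
    · exact ⟨(some V17.Y0, nu), by simp [WT], Or.inl rfl⟩
  | x0y0 r s =>
    cases x <;> rcases ou with _ | (_|_|_|_|_|_|_|_|_) <;> simp only [WT, Cl] at hu <;>
      first
      | exact absurd hu (by omega)
      | exact hu.elim
      | skip
    -- tau: X0, Y0 ; a: X0, Y0 ; b: none, Z0
    · exact ⟨(some V17.Y0, s), by simp [WT, Cl], Or.inr (Or.inl (GB.x0y0 i nu s))⟩
    · exact ⟨(some V17.Y0, nu), by simp [WT, Cl], Or.inl rfl⟩
    · exact ⟨(some V17.Y0, 0), by simp [WT], Or.inr (Or.inl (GB.x0y0 i nu 0))⟩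
    · exact ⟨(some V17.Y0, nu), by simp [WT], Or.inl rfl⟩
    · exact ⟨(none, nu), by simp [WT], Or.inl rfl⟩
    · exact ⟨(none, i), by simp [WT], Or.inr (Or.inl (GB.z0e i nu i le_rfl))⟩
  | z0e m k hk =>
    cases x <;> rcases ou with _ | (_|_|_|_|_|_|_|_|_) <;> simp only [WT, Cl] at hu <;>
      first
      | exact absurd hu (by omega)
      | exact hu.elim
      | skip
    -- tau: none, Z0 ; a: none, Z0
    · rcases le_or_gt nu k with h | h
      · exact ⟨(none, nu), by simp [WT, Cl]; omega, Or.inl rfl⟩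
      · exact ⟨(none, k), by simp [WT, Cl], Or.inr (Or.inl (GB.ee i nu k (by omega) (by omega)))⟩
    · exact ⟨(none, k), by simp [WT, Cl], Or.inr (Or.inl (GB.z0e i nu k (by omega)))⟩
    · rcases Nat.lt_or_ge nu k with h | h
      · exact ⟨(none, nu), by simp [WT]; omega, Or.inl rfl⟩
      · exact ⟨(none, k-1), by simp [WT]; omega, Or.inr (Or.inl (GB.ee i nu (k-1) (by omega) (by omega)))⟩
    · exact ⟨(none, k-1), by simp [WT]; omega, Or.inr (Or.inl (GB.z0e i nu (k-1) (by omega)))⟩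
  | ee j k hj hk =>
    cases x <;> rcases ou with _ | (_|_|_|_|_|_|_|_|_) <;> simp only [WT, Cl] at hu <;>
      first
      | exact absurd hu (by omega)
      | exact hu.elim
      | skip
    -- tau: none ; a: none
    · rcases le_or_gt nu k with h | h
      · exact ⟨(none, nu), by simp [WT, Cl]; omega, Or.inl rfl⟩
      · exact ⟨(none, k), by simp [WT, Cl], Or.inr (Or.inl (GB.ee i nu k (by omega) (by omega)))⟩
    · rcases Nat.lt_or_ge nu k with h | h
      · exact ⟨(none, nu), by simp [WT]; omega, Or.inl rfl⟩
      · exact ⟨(none, k-1), by simp [WT]; omega, Or.inr (Or.inl (GB.ee i nu (k-1) (by omega) (by omega)))⟩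

lemma GB_defend {i : ℕ} {s t : S9} (hp : GB (i+1) s t) {x : A17} {v : S9}
    (hv : WT x t v) : ∃ u, WT x s u ∧ (u = v ∨ GA i u v) := by
  obtain ⟨ov, nv⟩ := v
  cases hp with
  | xy =>
    cases x <;> rcases ov with _ | (_|_|_|_|_|_|_|_|_) <;> simp only [WT, Cl] at hv <;>
      first
      | exact absurd hv (by omega)
      | exact hv.elim
      | skip
    -- tau: W1?? no: from (Y1,0): tau: Y1 ; a: Y1 ; b: W1
    · exact ⟨(some V17.Y1, nv), by simp [WT, Cl], Or.inl rfl⟩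
    · exact ⟨(some V17.Y1, nv), by simp [WT, Cl], Or.inl rfl⟩
    · exact ⟨(some V17.W1, nv), by simp [WT], Or.inl rfl⟩
  | zw m k =>
    cases x <;> rcases ov with _ | (_|_|_|_|_|_|_|_|_) <;> simp only [WT, Cl] at hv <;>
      first
      | exact absurd hv (by omega)
      | exact hv.elim
      | skip
    -- from (W1,k): tau: W1 ; a: W1, S1 ; c: X0, Y0
    · exact ⟨(some V17.W1, nv), by simp [WT, Cl], Or.inl rfl⟩
    · exact ⟨(some V17.W1, nv), by simp [WT], Or.inl rfl⟩
    · exact ⟨(some V17.S1, nv), by simp [WT], Or.inl rfl⟩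
    · exact ⟨(some V17.X0, nv), by simp [WT], Or.inl rfl⟩
    · exact ⟨(some V17.Y0, nv), by simp [WT], Or.inl rfl⟩
  | ww j k =>
    cases x <;> rcases ov with _ | (_|_|_|_|_|_|_|_|_) <;> simp only [WT, Cl] at hv <;>
      first
      | exact absurd hv (by omega)
      | exact hv.elim
      | skip
    -- from (W1,k): tau: W1 ; a: W1, S1 ; c: X0, Y0
    · exact ⟨(some V17.W1, j), by simp [WT, Cl], Or.inr (Or.inl (GB.ww i j nv))⟩
    · exact ⟨(some V17.S1, nv), by simp [WT], Or.inr (Or.inr (GB.ws i nv nv))⟩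
    · exact ⟨(some V17.S1, nv), by simp [WT], Or.inl rfl⟩
    · exact ⟨(some V17.X0, nv), by simp [WT], Or.inl rfl⟩
    · exact ⟨(some V17.Y0, nv), by simp [WT], Or.inl rfl⟩
  | zs j m =>
    cases x <;> rcases ov with _ | (_|_|_|_|_|_|_|_|_) <;> simp only [WT, Cl] at hv <;>
      first
      | exact absurd hv (by omega)
      | exact hv.elim
      | skip
    -- from (S1,m): tau: S1 ; a: S1 ; c: Y0
    · exact ⟨(some V17.Z1, j), by simp [WT, Cl], Or.inr (Or.inl (GB.zs i j nv))⟩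
    · exact ⟨(some V17.S1, nv), by simp [WT], Or.inl rfl⟩
    · exact ⟨(some V17.Y0, nv), by simp [WT], Or.inl rfl⟩
  | ws j m =>
    cases x <;> rcases ov with _ | (_|_|_|_|_|_|_|_|_) <;> simp only [WT, Cl] at hv <;>
      first
      | exact absurd hv (by omega)
      | exact hv.elim
      | skip
    -- from (S1,m): tau: S1 ; a: S1 ; c: Y0
    · exact ⟨(some V17.W1, j), by simp [WT, Cl], Or.inr (Or.inl (GB.ws i j nv))⟩
    · exact ⟨(some V17.S1, nv), by simp [WT], Or.inl rfl⟩
    · exact ⟨(some V17.Y0, nv), by simp [WT], Or.inl rfl⟩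
  | x0y0 r s =>
    cases x <;> rcases ov with _ | (_|_|_|_|_|_|_|_|_) <;> simp only [WT, Cl] at hv <;>
      first
      | exact absurd hv (by omega)
      | exact hv.elim
      | skip
    -- from (Y0,s): tau: Y0 ; a: Y0 ; b: none
    · exact ⟨(some V17.Y0, nv), by simp [WT, Cl], Or.inl rfl⟩
    · exact ⟨(some V17.Y0, nv), by simp [WT], Or.inl rfl⟩
    · exact ⟨(none, nv), by simp [WT], Or.inl rfl⟩
  | z0e m k hk =>
    cases x <;> rcases ov with _ | (_|_|_|_|_|_|_|_|_) <;> simp only [WT, Cl] at hv <;>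
      first
      | exact absurd hv (by omega)
      | exact hv.elim
      | skip
    -- from (none,k): tau: none ; a: none
    · exact ⟨(none, nv), by simp [WT, Cl], Or.inl rfl⟩
    · exact ⟨(none, nv), by simp [WT], Or.inl rfl⟩
  | ee j k hj hk =>
    cases x <;> rcases ov with _ | (_|_|_|_|_|_|_|_|_) <;> simp only [WT, Cl] at hv <;>
      first
      | exact absurd hv (by omega)
      | exact hv.elim
      | skip
    -- from (none,k): tau: none ; a: none
    · rcases le_or_gt nv j with h | h
      · exact ⟨(none, nv), by simp [WT, Cl]; omega, Or.inl rfl⟩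
      · exact ⟨(none, j), by simp [WT, Cl], Or.inr (Or.inl (GB.ee i j nv (by omega) (by omega)))⟩
    · rcases Nat.lt_or_ge nv j with h | h
      · exact ⟨(none, nv), by simp [WT]; omega, Or.inl rfl⟩
      · exact ⟨(none, j-1), by simp [WT]; omega, Or.inr (Or.inl (GB.ee i (j-1) nv (by omega) (by omega)))⟩

lemma HB_attack {n : ℕ} {s t : S9} (hp : HB (n+1) s t) {x : A17} {u : S9}
    (hu : WT x s u) : ∃ v, WT x t v ∧ (u = v ∨ HA n u v) := by
  obtain ⟨ou, nu⟩ := u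
  cases hp with
  | xy =>
    cases x <;> rcases ou with _ | (_|_|_|_|_|_|_|_|_) <;> simp only [WT, Cl] at hu <;>
      first
      | exact absurd hu (by omega)
      | exact hu.elim
      | skip
    · obtain rfl : nu = 0 := Nat.le_zero.mp hu
      exact ⟨(some V17.Y1, 0), by simp [WT, Cl], Or.inr (Or.inl (HB.xy n))⟩
    · exact ⟨(some V17.Y1, nu), by simp [WT, Cl], Or.inl rfl⟩
    · exact ⟨(some V17.Y1, nu), by simp [WT], Or.inl rfl⟩
    · exact ⟨(some V17.W1, n), by simp [WT], Or.inr (Or.inl (HB.zw n nu n le_rfl))⟩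
    · exact ⟨(some V17.W1, nu), by simp [WT], Or.inl rfl⟩
  | zw m k hk =>
    cases x <;> rcases ou with _ | (_|_|_|_|_|_|_|_|_) <;> simp only [WT, Cl] at hu <;>
      first
      | exact absurd hu (by omega)
      | exact hu.elim
      | skip
    -- tau: Z1, W1 ; a: Z1, W1, S1 ; c: X0, Y0
    · exact ⟨(some V17.W1, k), by simp [WT, Cl], Or.inr (Or.inl (HB.zw n nu k (by omega)))⟩
    · rcases le_or_gt nu k with h | h
      · exact ⟨(some V17.W1, nu), by simp [WT, Cl]; omega, Or.inl rfl⟩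
      · exact ⟨(some V17.W1, k), by simp [WT, Cl],
          Or.inr (Or.inl (HB.ww n nu k (by omega) (by omega)))⟩
    · exact ⟨(some V17.W1, k-1), by simp [WT]; omega,
        Or.inr (Or.inl (HB.zw n nu (k-1) (by omega)))⟩
    · rcases Nat.lt_or_ge nu k with h | h
      · exact ⟨(some V17.W1, nu), by simp [WT]; omega, Or.inl rfl⟩
      · exact ⟨(some V17.W1, k-1), by simp [WT]; omega,
          Or.inr (Or.inl (HB.ww n nu (k-1) (by omega) (by omega)))⟩
    · exact ⟨(some V17.S1, nu), by simp [WT], Or.inl rfl⟩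
    · exact ⟨(some V17.X0, nu), by simp [WT], Or.inl rfl⟩
    · exact ⟨(some V17.Y0, nu), by simp [WT], Or.inl rfl⟩
  | ww j k hj hk =>
    cases x <;> rcases ou with _ | (_|_|_|_|_|_|_|_|_) <;> simp only [WT, Cl] at hu <;>
      first
      | exact absurd hu (by omega)
      | exact hu.elim
      | skip
    -- tau: W1 ; a: W1, S1 ; c: X0, Y0
    · rcases le_or_gt nu k with h | h
      · exact ⟨(some V17.W1, nu), by simp [WT, Cl]; omega, Or.inl rfl⟩
      · exact ⟨(some V17.W1, k), by simp [WT, Cl],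
          Or.inr (Or.inl (HB.ww n nu k (by omega) (by omega)))⟩
    · rcases Nat.lt_or_ge nu k with h | h
      · exact ⟨(some V17.W1, nu), by simp [WT]; omega, Or.inl rfl⟩
      · exact ⟨(some V17.W1, k-1), by simp [WT]; omega,
          Or.inr (Or.inl (HB.ww n nu (k-1) (by omega) (by omega)))⟩
    · exact ⟨(some V17.S1, nu), by simp [WT], Or.inl rfl⟩
    · exact ⟨(some V17.X0, nu), by simp [WT], Or.inl rfl⟩
    · exact ⟨(some V17.Y0, nu), by simp [WT], Or.inl rfl⟩

lemma HB_defend {n : ℕ} {s t : S9} (hp : HB (n+1) s t) {x : A17} {v : S9}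
    (hv : WT x t v) : ∃ u, WT x s u ∧ (u = v ∨ HA n u v) := by
  obtain ⟨ov, nv⟩ := v
  cases hp with
  | xy =>
    cases x <;> rcases ov with _ | (_|_|_|_|_|_|_|_|_) <;> simp only [WT, Cl] at hv <;>
      first
      | exact absurd hv (by omega)
      | exact hv.elim
      | skip
    · exact ⟨(some V17.Y1, nv), by simp [WT, Cl], Or.inl rfl⟩
    · exact ⟨(some V17.Y1, nv), by simp [WT, Cl], Or.inl rfl⟩
    · exact ⟨(some V17.W1, nv), by simp [WT], Or.inl rfl⟩
  | zw m k hk =>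
    cases x <;> rcases ov with _ | (_|_|_|_|_|_|_|_|_) <;> simp only [WT, Cl] at hv <;>
      first
      | exact absurd hv (by omega)
      | exact hv.elim
      | skip
    -- from (W1,k): tau: W1 ; a: W1, S1 ; c: X0, Y0
    · exact ⟨(some V17.W1, nv), by simp [WT, Cl], Or.inl rfl⟩
    · exact ⟨(some V17.W1, nv), by simp [WT], Or.inl rfl⟩
    · exact ⟨(some V17.S1, nv), by simp [WT], Or.inl rfl⟩
    · exact ⟨(some V17.X0, nv), by simp [WT], Or.inl rfl⟩
    · exact ⟨(some V17.Y0, nv), by simp [WT], Or.inl rfl⟩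
  | ww j k hj hk =>
    cases x <;> rcases ov with _ | (_|_|_|_|_|_|_|_|_) <;> simp only [WT, Cl] at hv <;>
      first
      | exact absurd hv (by omega)
      | exact hv.elim
      | skip
    -- from (W1,k): tau: W1 ; a: W1, S1 ; c: X0, Y0
    · rcases le_or_gt nv j with h | h
      · exact ⟨(some V17.W1, nv), by simp [WT, Cl]; omega, Or.inl rfl⟩
      · exact ⟨(some V17.W1, j), by simp [WT, Cl],
          Or.inr (Or.inl (HB.ww n j nv (by omega) (by omega)))⟩
    · rcases Nat.lt_or_ge nv j with h | h
      · exact ⟨(some V17.W1, nv), by simp [WT]; omega, Or.inl rfl⟩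
      · exact ⟨(some V17.W1, j-1), by simp [WT]; omega,
          Or.inr (Or.inl (HB.ww n (j-1) nv (by omega) (by omega)))⟩
    · exact ⟨(some V17.S1, nv), by simp [WT], Or.inl rfl⟩
    · exact ⟨(some V17.X0, nv), by simp [WT], Or.inl rfl⟩
    · exact ⟨(some V17.Y0, nv), by simp [WT], Or.inl rfl⟩

lemma GA_symm {i : ℕ} {s t : S9} (h : GA i s t) : GA i t s := h.symm
lemma HA_symm {n : ℕ} {s t : S9} (h : HA n s t) : HA n t s := h.symm

def Grel (i : ℕ) (α β : B17.Proc) : Prop :=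
  α = β ∨ ∃ s t, GA i s t ∧ α = pr s ∧ β = pr t

def Hrel (n : ℕ) (α β : B17.Proc) : Prop :=
  α = β ∨ ∃ s t, HA n s t ∧ α = pr s ∧ β = pr t

lemma grel_of {i : ℕ} {u v : S9} (h : u = v ∨ GA i u v) : Grel i (pr u) (pr v) := by
  rcases h with rfl | h
  · exact Or.inl rfl
  · exact Or.inr ⟨u, v, h, rfl, rfl⟩

lemma hrel_of {n : ℕ} {u v : S9} (h : u = v ∨ HA n u v) : Hrel n (pr u) (pr v) := by
  rcases h with rfl | h
  · exact Or.inl rfl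
  · exact Or.inr ⟨u, v, h, rfl, rfl⟩

lemma grel_step (i : ℕ) {α β : B17.Proc} (h : Grel (i+1) α β) :
    B17.RefLL (Grel i) α β := by
  rcases h with rfl | ⟨s, t, hga, rfl, rfl⟩
  · exact ⟨fun a α' h' => ⟨α', h', Or.inl rfl⟩, fun a β' h' => ⟨β', h', Or.inl rfl⟩⟩
  constructor
  · intro a α' hw
    obtain ⟨u, hAW, rfl⟩ := wstep_pr_iff.mp hw
    have hu := AW_iff.mp hAW
    rcases hga with hB | hB
    · obtain ⟨v, hwt, hx⟩ := GB_attack hB hu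
      exact ⟨pr v, wstep_pr_iff.mpr ⟨v, AW_iff.mpr hwt, rfl⟩, grel_of hx⟩
    · obtain ⟨v, hwt, hx⟩ := GB_defend hB hu
      refine ⟨pr v, wstep_pr_iff.mpr ⟨v, AW_iff.mpr hwt, rfl⟩, ?_⟩
      rcases hx with rfl | hx
      · exact Or.inl rfl
      · exact Or.inr ⟨u, v, GA_symm hx, rfl, rfl⟩
  · intro a β' hw
    obtain ⟨v, hAW, rfl⟩ := wstep_pr_iff.mp hw
    have hv := AW_iff.mp hAW
    rcases hga with hB | hB
    · obtain ⟨u, hwt, hx⟩ := GB_defend hB hv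
      refine ⟨pr u, wstep_pr_iff.mpr ⟨u, AW_iff.mpr hwt, rfl⟩, grel_of hx⟩
    · obtain ⟨u, hwt, hx⟩ := GB_attack hB hv
      refine ⟨pr u, wstep_pr_iff.mpr ⟨u, AW_iff.mpr hwt, rfl⟩, ?_⟩
      rcases hx with rfl | hx
      · exact Or.inl rfl
      · exact Or.inr ⟨_, _, GA_symm hx, rfl, rfl⟩

lemma hrel_step (n : ℕ) {α β : B17.Proc} (h : Hrel (n+1) α β) :
    B17.RefLL (Hrel n) α β := by
  rcases h with rfl | ⟨s, t, hga, rfl, rfl⟩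
  · exact ⟨fun a α' h' => ⟨α', h', Or.inl rfl⟩, fun a β' h' => ⟨β', h', Or.inl rfl⟩⟩
  constructor
  · intro a α' hw
    obtain ⟨u, hAW, rfl⟩ := wstep_pr_iff.mp hw
    have hu := AW_iff.mp hAW
    rcases hga with hB | hB
    · obtain ⟨v, hwt, hx⟩ := HB_attack hB hu
      exact ⟨pr v, wstep_pr_iff.mpr ⟨v, AW_iff.mpr hwt, rfl⟩, hrel_of hx⟩
    · obtain ⟨v, hwt, hx⟩ := HB_defend hB hu
      refine ⟨pr v, wstep_pr_iff.mpr ⟨v, AW_iff.mpr hwt, rfl⟩, ?_⟩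
      rcases hx with rfl | hx
      · exact Or.inl rfl
      · exact Or.inr ⟨u, v, HA_symm hx, rfl, rfl⟩
  · intro a β' hw
    obtain ⟨v, hAW, rfl⟩ := wstep_pr_iff.mp hw
    have hv := AW_iff.mp hAW
    rcases hga with hB | hB
    · obtain ⟨u, hwt, hx⟩ := HB_defend hB hv
      refine ⟨pr u, wstep_pr_iff.mpr ⟨u, AW_iff.mpr hwt, rfl⟩, hrel_of hx⟩
    · obtain ⟨u, hwt, hx⟩ := HB_attack hB hv
      refine ⟨pr u, wstep_pr_iff.mpr ⟨u, AW_iff.mpr hwt, rfl⟩, ?_⟩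
      rcases hx with rfl | hx
      · exact Or.inl rfl
      · exact Or.inr ⟨_, _, HA_symm hx, rfl, rfl⟩

/-! ### Generic approximant machinery -/

section ApproxMach

variable (F : (B17.Proc → B17.Proc → Prop) → (B17.Proc → B17.Proc → Prop))

lemma approx_zero : B17.Approx F 0 = fun _ _ => True :=
  Ordinal.limitRecOn_zero _ _ _

lemma approx_succ (o : Ordinal) : B17.Approx F (o + 1) = F (B17.Approx F o) := by
  rw [BPP.Approx, Ordinal.add_one_eq_succ, Ordinal.limitRecOn_succ]
  rfl

lemma approx_limit {o : Ordinal} (ho : Order.IsSuccLimit o) :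
    B17.Approx F o = fun α β => ∀ i, i < o → B17.Approx F i α β := by
  rw [BPP.Approx, Ordinal.limitRecOn_limit _ _ _ _ ho]
  rfl

variable (hm : ∀ (R R' : B17.Proc → B17.Proc → Prop),
  (∀ a b, R a b → R' a b) → ∀ a b, F R a b → F R' a b)

include hm in
lemma approx_anti : ∀ o o', o' ≤ o → ∀ α β,
    B17.Approx F o α β → B17.Approx F o' α β := by
  intro o
  induction o using Ordinal.induction with
  | _ o IH =>
    have key : ∀ p, p < o → ∀ α β, B17.Approx F (p+1) α β → B17.Approx F p α β := by
      intro p hp α β hap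
      rcases Ordinal.zero_or_succ_or_isSuccLimit p with rfl | ⟨q, rfl⟩ | hlim
      · rw [approx_zero]; trivial
      · rw [approx_succ] at hap
        rw [← Ordinal.add_one_eq_succ] at *
        rw [approx_succ]
        exact hm _ _ (fun a b h => IH (q+1) hp q
          (le_of_lt (Order.lt_succ q)) a b h) _ _ hap
      · rw [approx_limit F hlim]
        intro i hi
        rw [approx_succ] at hap
        have h1 : ∀ a b, B17.Approx F p a b → B17.Approx F i a b := by
          intro a b h
          rw [approx_limit F hlim] at h
          exact h i hi
        have h2 : F (B17.Approx F i) α β := hm _ _ h1 _ _ hap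
        rw [← approx_succ F i] at h2
        exact IH (i+1) (lt_trans (by rw [Ordinal.add_one_eq_succ]; exact hlim.succ_lt hi) hp) i (le_of_lt (Order.lt_succ i)) _ _ h2
    intro o' ho' α β h
    rcases eq_or_lt_of_le ho' with rfl | hlt
    · exact h
    rcases Ordinal.zero_or_succ_or_isSuccLimit o with rfl | ⟨q, rfl⟩ | hlim
    · exact absurd hlt (by simp)
    · have hq : o' ≤ q := Order.le_of_lt_succ hlt
      have : B17.Approx F q α β := by
        rw [← Ordinal.add_one_eq_succ] at h
        exact key q (by rw [← Ordinal.add_one_eq_succ]; exact Order.lt_succ q) α β h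
      exact IH q (Order.lt_succ q) o' hq α β this
    · rw [approx_limit F hlim] at h
      exact h o' hlt

end ApproxMach

lemma refll_mono (R R' : B17.Proc → B17.Proc → Prop)
    (h : ∀ a b, R a b → R' a b) : ∀ a b, B17.RefLL R a b → B17.RefLL R' a b := by
  rintro a b ⟨h1, h2⟩
  constructor
  · intro x α' hw
    obtain ⟨β', hwb, hr⟩ := h1 x α' hw
    exact ⟨β', hwb, h _ _ hr⟩
  · intro x β' hw
    obtain ⟨α', hwa, hr⟩ := h2 x β' hw
    exact ⟨α', hwa, h _ _ hr⟩

lemma grel_approx (i : ℕ) : ∀ α β, Grel i α β →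
    B17.Approx B17.RefLL (i : Ordinal) α β := by
  induction i with
  | zero =>
    intro α β _
    have : ((0 : ℕ) : Ordinal) = 0 := by simp
    rw [this, approx_zero]
    trivial
  | succ i ih =>
    intro α β h
    have hcast : ((i + 1 : ℕ) : Ordinal) = (i : Ordinal) + 1 := by push_cast; ring
    rw [hcast, approx_succ]
    exact refll_mono _ _ ih α β (grel_step i h)

lemma hrel0_grel (i : ℕ) {α β : B17.Proc} (h : Hrel 0 α β) : Grel i α β := by
  rcases h with rfl | ⟨s, t, hha, rfl, rfl⟩
  · exact Or.inl rfl
  refine Or.inr ⟨s, t, ?_, rfl, rfl⟩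
  rcases hha with hB | hB
  · cases hB with
    | xy => exact Or.inl (GB.xy i)
    | zw m k hk => exact Or.inl (GB.zw i m k)
    | ww j k hj hk => exact Or.inl (GB.ww i j k)
  · cases hB with
    | xy => exact Or.inr (GB.xy i)
    | zw m k hk => exact Or.inr (GB.zw i m k)
    | ww j k hj hk => exact Or.inr (GB.ww i j k)

lemma hrel_approx (n : ℕ) : ∀ α β, Hrel n α β →
    B17.Approx B17.RefLL (Ordinal.omega0 + n) α β := by
  induction n with
  | zero =>
    intro α β h
    have : Ordinal.omega0 + ((0 : ℕ) : Ordinal) = Ordinal.omega0 := by simp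
    rw [this, approx_limit _ Ordinal.isSuccLimit_omega0]
    intro i hi
    obtain ⟨m, rfl⟩ := Ordinal.lt_omega0.mp hi
    exact grel_approx m α β (hrel0_grel m h)
  | succ n ih =>
    intro α β h
    have hcast : Ordinal.omega0 + ((n + 1 : ℕ) : Ordinal) =
        (Ordinal.omega0 + (n : Ordinal)) + 1 := by push_cast; rw [add_assoc]
    rw [hcast, approx_succ]
    exact refll_mono _ _ ih α β (hrel_step n h)

lemma positive_part :
    B17.Approx B17.RefLL (Ordinal.omega0 + Ordinal.omega0)
      ({V17.X1} : Multiset V17) ({V17.Y1} : Multiset V17) := by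
  have hX : ({V17.X1} : Multiset V17) = pr (some V17.X1, 0) := by simp [pr]
  have hY : ({V17.Y1} : Multiset V17) = pr (some V17.Y1, 0) := by simp [pr]
  rw [hX, hY, approx_limit _ (Ordinal.isSuccLimit_add _ Ordinal.isSuccLimit_omega0)]
  intro i hi
  have hex : ∃ n : ℕ, i ≤ Ordinal.omega0 + n := by
    rcases lt_or_ge i Ordinal.omega0 with h | h
    · exact ⟨0, by simpa using le_of_lt h⟩
    · have heq : Ordinal.omega0 + (i - Ordinal.omega0) = i := Ordinal.add_sub_cancel_of_le h
      have hlt : i - Ordinal.omega0 < Ordinal.omega0 := by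
        by_contra hge
        push_neg at hge
        have := add_le_add (le_refl Ordinal.omega0) hge
        rw [heq] at this
        exact absurd hi (not_lt.mpr this)
      obtain ⟨n, hn⟩ := Ordinal.lt_omega0.mp hlt
      exact ⟨n, by rw [← heq, hn]⟩
  obtain ⟨n, hn⟩ := hex
  refine approx_anti B17.RefLL refll_mono _ _ hn _ _ ?_
  exact hrel_approx n _ _ (Or.inr ⟨_, _, Or.inl (HB.xy n), rfl, rfl⟩)

/-! ### The negative part: X₁ ≉ Y₁ -/

section Negative

variable {R : B17.Proc → B17.Proc → Prop} (hR : B17.IsWeakBisim R)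

include hR in
lemma N6 : ∀ k j, ¬ R (pr (some V17.Z0, j)) (pr (none, k)) := by
  intro k
  induction k using Nat.strong_induction_on with
  | _ k IH =>
    intro j h
    obtain ⟨β', hw, hr⟩ := hR.2 _ _ h _ _
      (astep_step (show AStep A17.tau (some V17.Z0, j) (some V17.Z0, j+1) by simp [AStep]))
    obtain ⟨⟨ot, nt⟩, hAW, rfl⟩ := wstep_pr_iff.mp hw
    have hwt := AW_iff.mp hAW
    rcases ot with _ | (_|_|_|_|_|_|_|_|_) <;> simp only [WT, Cl] at hwt <;>
      try exact hwt.elim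
    obtain ⟨β'', hw2, hr2⟩ := hR.2 _ _ hr _ _
      (astep_step (show AStep A17.a (some V17.Z0, j+1) (some V17.Z0, j) by simp [AStep]))
    obtain ⟨⟨ot2, nt2⟩, hAW2, rfl⟩ := wstep_pr_iff.mp hw2
    have hwt2 := AW_iff.mp hAW2
    rcases ot2 with _ | (_|_|_|_|_|_|_|_|_) <;> simp only [WT, Cl] at hwt2 <;>
      try exact hwt2.elim
    exact IH nt2 (by omega) j hr2

include hR in
lemma N5 : ∀ j m, ¬ R (pr (some V17.X0, j)) (pr (some V17.Y0, m)) := by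
  intro j m h
  obtain ⟨β', hw, hr⟩ := hR.2 _ _ h _ _
    (astep_step (show AStep A17.b (some V17.X0, j) (some V17.Z0, j) by simp [AStep]))
  obtain ⟨⟨ot, nt⟩, hAW, rfl⟩ := wstep_pr_iff.mp hw
  have hwt := AW_iff.mp hAW
  rcases ot with _ | (_|_|_|_|_|_|_|_|_) <;> simp only [WT, Cl] at hwt <;>
    try exact hwt.elim
  exact N6 hR nt j hr

include hR in
lemma N4 : ∀ j i, ¬ R (pr (some V17.W1, j)) (pr (some V17.S1, i)) := by
  intro j i h
  obtain ⟨β', hw, hr⟩ := hR.2 _ _ h _ _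
    (astep_step (show AStep A17.c (some V17.W1, j) (some V17.X0, j) by simp [AStep]))
  obtain ⟨⟨ot, nt⟩, hAW, rfl⟩ := wstep_pr_iff.mp hw
  have hwt := AW_iff.mp hAW
  rcases ot with _ | (_|_|_|_|_|_|_|_|_) <;> simp only [WT, Cl] at hwt <;>
    try exact hwt.elim
  exact N5 hR j nt hr

include hR in
lemma N3 : ∀ j i, ¬ R (pr (some V17.Z1, j)) (pr (some V17.S1, i)) := by
  intro j i h
  obtain ⟨β', hw, hr⟩ := hR.2 _ _ h _ _
    (astep_step (show AStep A17.tau (some V17.Z1, j) (some V17.W1, j) by simp [AStep]))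
  obtain ⟨⟨ot, nt⟩, hAW, rfl⟩ := wstep_pr_iff.mp hw
  have hwt := AW_iff.mp hAW
  rcases ot with _ | (_|_|_|_|_|_|_|_|_) <;> simp only [WT, Cl] at hwt <;>
    try exact hwt.elim
  exact N4 hR j nt hr

include hR in
lemma N2 : ∀ m j, ¬ R (pr (some V17.Z1, j)) (pr (some V17.W1, m)) := by
  intro m
  induction m using Nat.strong_induction_on with
  | _ m IH =>
    intro j h
    obtain ⟨β', hw, hr⟩ := hR.2 _ _ h _ _
      (astep_step (show AStep A17.tau (some V17.Z1, j) (some V17.Z1, j+1) by simp [AStep]))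
    obtain ⟨⟨ot, nt⟩, hAW, rfl⟩ := wstep_pr_iff.mp hw
    have hwt := AW_iff.mp hAW
    rcases ot with _ | (_|_|_|_|_|_|_|_|_) <;> simp only [WT, Cl] at hwt <;>
      try exact hwt.elim
    obtain ⟨β'', hw2, hr2⟩ := hR.2 _ _ hr _ _
      (astep_step (show AStep A17.a (some V17.Z1, j+1) (some V17.Z1, j) by simp [AStep]))
    obtain ⟨⟨ot2, nt2⟩, hAW2, rfl⟩ := wstep_pr_iff.mp hw2
    have hwt2 := AW_iff.mp hAW2
    rcases ot2 with _ | (_|_|_|_|_|_|_|_|_) <;> simp only [WT, Cl] at hwt2 <;>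
      try exact hwt2.elim
    · exact IH nt2 (by omega) j hr2
    · exact N3 hR j nt2 hr2

lemma negative_part : ¬ B17.WBisim ({V17.X1} : Multiset V17) ({V17.Y1} : Multiset V17) := by
  rintro ⟨R, hR, h⟩
  have hX : ({V17.X1} : Multiset V17) = pr (some V17.X1, 0) := by simp [pr]
  have hY : ({V17.Y1} : Multiset V17) = pr (some V17.Y1, 0) := by simp [pr]
  rw [hX, hY] at h
  obtain ⟨β', hw, hr⟩ := hR.2 _ _ h _ _
    (astep_step (show AStep A17.b (some V17.X1, 0) (some V17.Z1, 0) by simp [AStep]))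
  obtain ⟨⟨ot, nt⟩, hAW, rfl⟩ := wstep_pr_iff.mp hw
  have hwt := AW_iff.mp hAW
  rcases ot with _ | (_|_|_|_|_|_|_|_|_) <;> simp only [WT, Cl] at hwt <;>
    try exact hwt.elim
  exact N2 hR nt 0 hr

end Negative

/-- `X₁ ≈ᴸ_{ω+ω} Y₁` but `X₁ ≉ Y₁`; hence long-long approximants
do not stabilize at level `ω+ω = ω·2`. -/
theorem ll_approximants_not_stable_at_omega_plus_omega :
    B17.Approx B17.RefLL (Ordinal.omega0 + Ordinal.omega0)
      ({V17.X1} : Multiset V17) ({V17.Y1} : Multiset V17) ∧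
    ¬ B17.WBisim ({V17.X1} : Multiset V17) ({V17.Y1} : Multiset V17) ∧
    ¬ (∀ α β : B17.Proc, B17.WBisim α β ↔
        B17.Approx B17.RefLL (Ordinal.omega0 + Ordinal.omega0) α β) := by
  refine ⟨positive_part, negative_part, fun h => negative_part ?_⟩
  exact (h _ _).mpr positive_part
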